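/- Let L be an integrable real random variable on a probability space with CDF F(y) = ℙ(L ≤ y), let α ∈ (0,1), and define the lower quantile function q(β) = inf{y ∈ ℝ : F(y) ≥ β} for β ∈ (0,1) and v = q(α). Then ∫_α^1 q(β) dβ = (1−α)·v + 𝔼[(L − v)⁺], i.e., the two expressions (1/(1−α))·∫_α^1 q(β) dβ and v + (1/(1−α))·𝔼[(L − v)⁺] for the α-CVaR of L coincide. -/

import Mathlib

open MeasureTheory

/-- The two representations of α-CVaR coincide: with `F` the CDF of an
integrable random variable `L`, `q` the lower quantile function and
`v = q(α)`, one has `∫_α^1 q(β) dβ = (1−α)·v + 𝔼[(L − v)⁺]`. -/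
theorem stmt_13 {Ω : Type*} [MeasurableSpace Ω] (μ : Measure Ω) [IsProbabilityMeasure μ]
    (L : Ω → ℝ) (hL : Integrable L μ) (α : ℝ) (hα : α ∈ Set.Ioo (0:ℝ) 1)
    (F : ℝ → ℝ) (hF : ∀ y : ℝ, F y = (μ {ω | L ω ≤ y}).toReal)
    (q : ℝ → ℝ) (hq : ∀ β ∈ Set.Ioo (0:ℝ) 1, q β = sInf {y : ℝ | β ≤ F y})
    (v : ℝ) (hv : v = q α) :
    ∫ β in Set.Ioo α 1, q β = (1 - α) * v + ∫ ω, max (L ω - v) 0 ∂μ := by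
  obtain ⟨hα0, hα1⟩ := hα
  have hLm : AEMeasurable L μ := hL.aemeasurable
  set ν : Measure ℝ := μ.map L with hν
  have hνP : IsProbabilityMeasure ν := Measure.isProbabilityMeasure_map hLm
  have hFc : F = fun y => ProbabilityTheory.cdf ν y := by
    funext y
    rw [hF, ProbabilityTheory.cdf_eq_real, measureReal_def]
    congr 1
    rw [hν, Measure.map_apply_of_aemeasurable hLm measurableSet_Iic]
    rfl
  have hFmono : Monotone F := by
    rw [hFc]; exact ProbabilityTheory.monotone_cdf ν
  have hF01 : ∀ y, 0 ≤ F y ∧ F y ≤ 1 := by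
    intro y; rw [hFc]
    exact ⟨ProbabilityTheory.cdf_nonneg ν y, ProbabilityTheory.cdf_le_one ν y⟩
  -- key: quantile/cdf Galois connection
  have hS : ∀ β ∈ Set.Ioo (0:ℝ) 1, ∀ t : ℝ, q β ≤ t ↔ β ≤ F t := by
    intro β hβ t
    have hne : {y : ℝ | β ≤ F y}.Nonempty := by
      have h1 : Filter.Tendsto F Filter.atTop (nhds 1) := by
        rw [hFc]; exact ProbabilityTheory.tendsto_cdf_atTop ν
      obtain ⟨y, hy⟩ := (h1.eventually (eventually_ge_nhds hβ.2)).exists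
      exact ⟨y, hy⟩
    have hbdd : BddBelow {y : ℝ | β ≤ F y} := by
      have h0 : Filter.Tendsto F Filter.atBot (nhds 0) := by
        rw [hFc]; exact ProbabilityTheory.tendsto_cdf_atBot ν
      obtain ⟨z, hz⟩ := (h0.eventually (eventually_lt_nhds hβ.1)).exists
      refine ⟨z, fun y hy => ?_⟩
      by_contra hzy
      exact absurd (le_trans hy (hFmono (le_of_not_ge hzy))) (not_le.mpr hz)
    rw [hq β hβ]
    constructor
    · intro h
      have key : ∀ y, t < y → β ≤ F y := by
        intro y hy
        obtain ⟨s, hsS, hsy⟩ := exists_lt_of_csInf_lt hne (lt_of_le_of_lt h hy)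
        exact le_trans hsS (hFmono hsy.le)
      have hrc : Filter.Tendsto F (nhdsWithin t (Set.Ioi t)) (nhds (F t)) := by
        rw [hFc]
        exact ((ProbabilityTheory.cdf ν).right_continuous t).mono_left
          (nhdsWithin_mono t Set.Ioi_subset_Ici_self)
      exact ge_of_tendsto hrc (eventually_nhdsWithin_of_forall (fun y hy => key y hy))
    · intro h
      exact csInf_le hbdd h
  have hvq : ∀ t : ℝ, v ≤ t ↔ α ≤ F t := fun t => hv ▸ hS α ⟨hα0, hα1⟩ t
  have hFv : α ≤ F v := (hvq v).mp le_rfl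
  have hqmono : MonotoneOn q (Set.Ioo α 1) := by
    intro a ha b hb hab
    have hb' : b ∈ Set.Ioo (0:ℝ) 1 := ⟨lt_trans hα0 hb.1, hb.2⟩
    have ha' : a ∈ Set.Ioo (0:ℝ) 1 := ⟨lt_trans hα0 ha.1, ha.2⟩
    exact (hS a ha' (q b)).mpr (le_trans hab ((hS b hb' (q b)).mp le_rfl))
  have hvle : ∀ β ∈ Set.Ioo α 1, v ≤ q β := by
    intro β hβ
    have hβ' : β ∈ Set.Ioo (0:ℝ) 1 := ⟨lt_trans hα0 hβ.1, hβ.2⟩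
    exact (hvq (q β)).mpr (le_trans hβ.1.le ((hS β hβ' (q β)).mp le_rfl))
  -- tail measure
  have hμgt : ∀ y : ℝ, μ {ω | y < L ω} = ENNReal.ofReal (1 - F y) := by
    intro y
    have h1 : μ {ω | y < L ω} = ν (Set.Ioi y) := by
      rw [hν, Measure.map_apply_of_aemeasurable hLm measurableSet_Ioi]; rfl
    rw [h1, ← Set.compl_Iic, measure_compl measurableSet_Iic (measure_ne_top _ _),
      measure_univ, ← ProbabilityTheory.ofReal_cdf]
    simp only [hFc]
    rw [ENNReal.ofReal_sub 1 (ProbabilityTheory.cdf_nonneg ν y), ENNReal.ofReal_one]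
  -- RHS via layercake
  set g : Ω → ℝ := fun ω => max (L ω - v) 0 with hg
  have hgint : Integrable g μ := (hL.sub (integrable_const v)).pos_part
  have hgnn : 0 ≤ᵐ[μ] g := Filter.Eventually.of_forall (fun ω => le_max_right _ _)
  have hgmeas : ∀ t : ℝ, 0 < t → μ {a | t < g a} = ENNReal.ofReal (1 - F (v + t)) := by
    intro t ht
    have hset : {a | t < g a} = {ω | v + t < L ω} := by
      ext a
      simp only [hg, Set.mem_setOf_eq, lt_max_iff]
      constructor
      · rintro (h | h)
        · linarith
        · exact absurd ht (not_lt.mpr h.le)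
      · intro h; left; linarith
    rw [hset, hμgt]
  -- left side layercake on (α,1)
  set μr : Measure ℝ := volume.restrict (Set.Ioo α 1) with hμr
  have hqae : AEMeasurable q μr :=
    aemeasurable_restrict_of_monotoneOn measurableSet_Ioo hqmono
  have hqvae : AEMeasurable (fun β => q β - v) μr := hqae.sub aemeasurable_const
  have hqvnn : 0 ≤ᵐ[μr] fun β => q β - v := by
    rw [hμr]
    exact (ae_restrict_iff' measurableSet_Ioo).mpr
      (Filter.Eventually.of_forall (fun β hβ => sub_nonneg.mpr (hvle β hβ)))
  have hmeaseq : ∀ t : ℝ, 0 < t → μr {β | t < q β - v} = μ {a | t < g a} := by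
    intro t ht
    have hset : {β | t < q β - v} ∩ Set.Ioo α 1 = Set.Ioo (F (v + t)) 1 := by
      ext β
      simp only [Set.mem_inter_iff, Set.mem_setOf_eq, Set.mem_Ioo]
      constructor
      · rintro ⟨h1, h2, h3⟩
        refine ⟨?_, h3⟩
        have hβ' : β ∈ Set.Ioo (0:ℝ) 1 := ⟨lt_trans hα0 h2, h3⟩
        by_contra hc
        have := (hS β hβ' (v + t)).mpr (le_of_not_gt hc)
        linarith
      · rintro ⟨h1, h2⟩
        have hαβ : α < β := lt_of_le_of_lt (le_trans hFv (hFmono (by linarith))) h1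
        have hβ' : β ∈ Set.Ioo (0:ℝ) 1 := ⟨lt_trans hα0 hαβ, h2⟩
        refine ⟨?_, hαβ, h2⟩
        by_contra hc
        have := (hS β hβ' (v + t)).mp (by linarith)
        linarith
    rw [hμr, Measure.restrict_apply' measurableSet_Ioo, hset, Real.volume_Ioo,
      hgmeas t ht]
  have hkey : ∫⁻ β, ENNReal.ofReal (q β - v) ∂μr = ∫⁻ ω, ENNReal.ofReal (g ω) ∂μ := by
    rw [lintegral_eq_lintegral_meas_lt μr hqvnn hqvae,
      lintegral_eq_lintegral_meas_lt μ hgnn hgint.aemeasurable]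
    exact setLIntegral_congr_fun_ae measurableSet_Ioi
      (Filter.Eventually.of_forall (fun t ht => hmeaseq t ht))
  have hqvint : Integrable (fun β => q β - v) μr := by
    refine ⟨hqvae.aestronglyMeasurable, ?_⟩
    rw [hasFiniteIntegral_iff_ofReal hqvnn, hkey]
    exact hgint.lintegral_lt_top
  have hint_eq : ∫ β in Set.Ioo α 1, (q β - v) = ∫ ω, g ω ∂μ := by
    rw [show ∫ β in Set.Ioo α 1, (q β - v) = ∫ β, (q β - v) ∂μr from rfl,
      hqvint.integral_eq_integral_meas_lt hqvnn,
      hgint.integral_eq_integral_meas_lt hgnn]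
    exact setIntegral_congr_fun measurableSet_Ioi (fun t ht => by rw [measureReal_def, measureReal_def, hmeaseq t ht])
  have hvol : (volume (Set.Ioo α 1)).toReal = 1 - α := by
    rw [Real.volume_Ioo, ENNReal.toReal_ofReal (by linarith)]
  have hconst : IntegrableOn (fun _ : ℝ => v) (Set.Ioo α 1) volume := by
    refine integrableOn_const ?_
    rw [Real.volume_Ioo]; exact ENNReal.ofReal_ne_top
  have : ∫ β in Set.Ioo α 1, q β = ∫ β in Set.Ioo α 1, ((q β - v) + v) := by
    congr 1; funext β; ring
  rw [this, integral_add hqvint hconst, hint_eq, setIntegral_const, measureReal_def, hvol]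
  simp [smul_eq_mul]
  ring
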